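/- Let Z = ∏_{k=1}^K [a_k, b_k] ⊆ ℝ^K be a product of closed bounded real intervals, let f : ℝ^K → ℝ^m and h : ℝ^m → ℝ^d be continuous maps with g = h ∘ f injective on Z, and set V := f '' Z (the layer image set). Then for every continuous map T' : V → V, the map T := h ∘ T' ∘ (h|_V)⁻¹ is a well-defined continuous map from g '' Z to g '' Z satisfying T(h(v)) = h(T'(v)) for every v ∈ V; hence T is an endomorphism of the image set g '' Z intrinsically disentangled with respect to the full layer. -/
import Mathlib


/-- Proposition 3, full layer disentanglement: with `g = h ∘ f`
injective on the latent box `Z` and `V := f '' Z` the layer image set, every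
continuous `T' : V → V` induces a well-defined continuous endomorphism `T` of
the image set `g '' Z` satisfying `T (h v) = h (T' v)` for every `v ∈ V`. -/
theorem stmt3 (K m d : ℕ) (a b : Fin K → ℝ)
    (Z : Set (Fin K → ℝ)) (hZ : Z = Set.univ.pi fun k => Set.Icc (a k) (b k))
    (f : (Fin K → ℝ) → (Fin m → ℝ)) (h : (Fin m → ℝ) → (Fin d → ℝ))
    (hf : Continuous f) (hh : Continuous h)
    (hinj : Set.InjOn (h ∘ f) Z)
    (T' : (f '' Z) → (f '' Z)) (hT' : Continuous T') :
    ∃ T : ((h ∘ f) '' Z) → ((h ∘ f) '' Z), Continuous T ∧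
      ∀ (v : Fin m → ℝ) (hv : v ∈ f '' Z) (hy : h v ∈ (h ∘ f) '' Z),
        (T ⟨h v, hy⟩).1 = h (T' ⟨v, hv⟩).1 := by
  have hVZ : ∀ v : (Fin m → ℝ), v ∈ f '' Z → h v ∈ (h ∘ f) '' Z := by
    rintro v ⟨z, hz, rfl⟩; exact ⟨z, hz, rfl⟩
  have hcompZ : IsCompact Z := by
    rw [hZ]; exact isCompact_univ_pi fun k => isCompact_Icc
  have hcompV : IsCompact (f '' Z) := hcompZ.image hf
  have hinjV : Set.InjOn h (f '' Z) := by
    rintro v1 ⟨z1, hz1, rfl⟩ v2 ⟨z2, hz2, rfl⟩ hhv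
    rw [hinj hz1 hz2 hhv]
  let φ : (f '' Z) → ((h ∘ f) '' Z) := fun v => ⟨h v.1, hVZ v.1 v.2⟩
  have hφc : Continuous φ := Continuous.subtype_mk (hh.comp continuous_subtype_val) _
  have hφbij : Function.Bijective φ := by
    constructor
    · rintro ⟨v1, hv1⟩ ⟨v2, hv2⟩ heq
      simp only [φ, Subtype.mk.injEq] at heq
      exact Subtype.ext (hinjV hv1 hv2 heq)
    · rintro ⟨y, z, hz, rfl⟩
      exact ⟨⟨f z, ⟨z, hz, rfl⟩⟩, rfl⟩
  haveI : CompactSpace (f '' Z) := isCompact_iff_compactSpace.mp hcompV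
  let e := Continuous.homeoOfEquivCompactToT2 (f := Equiv.ofBijective φ hφbij) hφc
  refine ⟨e ∘ T' ∘ e.symm, e.continuous.comp (hT'.comp e.symm.continuous), ?_⟩
  intro v hv hy
  have hsymm : e.symm ⟨h v, hy⟩ = ⟨v, hv⟩ := by
    apply e.injective
    rw [e.apply_symm_apply]
    rfl
  simp only [Function.comp_apply, hsymm]
  rfl
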